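/- Every element (x,y,z) of the discrete Heisenberg group 𝓗 has a geodesic representative with respect to the generating set X = {a, a⁻¹, b, b⁻¹} of the form a^{α₁} b^{β₁} a^{α₂} b^{β₂} a^{α₃} b^{β₃} or of the form b^{β₁} a^{α₁} b^{β₂} a^{α₂} b^{β₃} a^{α₃}, where each αᵢ, βⱼ ∈ ℤ. -/

import Mathlib

open scoped commutatorElement

/-- The two generators `a, b` of the discrete Heisenberg group. -/
inductive HGen : Type
  | a | b
deriving DecidableEq

/-- Relators of the discrete Heisenberg group `⟨a,b ∣ [a,[a,b]] = [b,[a,b]] = 1⟩`. -/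
def Hrels : Set (FreeGroup HGen) :=
  { ⁅FreeGroup.of HGen.a, ⁅FreeGroup.of HGen.a, FreeGroup.of HGen.b⁆⁆,
    ⁅FreeGroup.of HGen.b, ⁅FreeGroup.of HGen.a, FreeGroup.of HGen.b⁆⁆ }

/-- The discrete Heisenberg group `𝓗`. -/
abbrev Heis : Type := PresentedGroup Hrels

/-- The generator `a` of `𝓗`. -/
def Ha : Heis := PresentedGroup.of HGen.a

/-- The generator `b` of `𝓗`. -/
def Hb : Heis := PresentedGroup.of HGen.b

/-- The four letters of the alphabet `X = {a, a⁻¹, b, b⁻¹}`. -/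
inductive XLetter : Type
  | a | A | b | B
deriving DecidableEq

/-- The element of `𝓗` represented by a letter of `X`. -/
def XLetter.toH : XLetter → Heis
  | .a => Ha
  | .A => Ha⁻¹
  | .b => Hb
  | .B => Hb⁻¹

/-- The element of `𝓗` represented by a word over `X`. -/
def evalX (w : List XLetter) : Heis := (w.map XLetter.toH).prod

/-- The word `a^k` over `X`, for `k ∈ ℤ`. -/
def apow (k : ℤ) : List XLetter :=
  if 0 ≤ k then List.replicate k.toNat XLetter.a else List.replicate (-k).toNat XLetter.A

/-- The word `b^k` over `X`, for `k ∈ ℤ`. -/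
def bpow (k : ℤ) : List XLetter :=
  if 0 ≤ k then List.replicate k.toNat XLetter.b else List.replicate (-k).toNat XLetter.B

/-- The element `(x,y,z)` of `𝓗`, i.e. the element with normal form `[a,b]^z b^y a^x`. -/
def hElt (x y z : ℤ) : Heis := ⁅Ha, Hb⁆ ^ z * Hb ^ y * Ha ^ x

/-- The word length `ℓ_X(g)` of `g ∈ 𝓗` with respect to `X`. -/
noncomputable def lenX (g : Heis) : ℕ :=
  sInf { n | ∃ w : List XLetter, evalX w = g ∧ w.length = n }

/-- A word over `X` is geodesic if its length equals the word length of the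
element it represents. -/
def IsGeodesicX (w : List XLetter) : Prop := w.length = lenX (evalX w)

abbrev T3 := ℤ × ℤ × ℤ

def m3 (p q : T3) : T3 := (p.1 + q.1, p.2.1 + q.2.1, p.2.2 + q.2.2 + p.1 * q.2.1)

lemma m3_assoc (p q r : T3) : m3 (m3 p q) r = m3 p (m3 q r) := by
  simp only [m3]; refine Prod.ext ?_ (Prod.ext ?_ ?_) <;> simp <;> ring

def stepL : XLetter → T3
  | .a => (1,0,0) | .A => (-1,0,0) | .b => (0,1,0) | .B => (0,-1,0)

def phiX (w : List XLetter) : T3 := w.foldr (fun l s => m3 (stepL l) s) (0,0,0)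

@[simp] lemma phiX_nil : phiX [] = (0,0,0) := rfl
@[simp] lemma phiX_cons (l : XLetter) (w : List XLetter) :
    phiX (l :: w) = m3 (stepL l) (phiX w) := rfl

@[simp] lemma m3_zero_right (p : T3) : m3 p 0 = p := by
  simp [m3]

@[simp] lemma m3_zero_left (p : T3) : m3 0 p = p := by
  simp [m3]

lemma phiX_append (u v : List XLetter) : phiX (u ++ v) = m3 (phiX u) (phiX v) := by
  induction u with
  | nil => simp [m3]
  | cons l u ih => simp [ih, m3_assoc]

@[simp] lemma phiX_single (l : XLetter) : phiX [l] = stepL l := by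
  simp [m3]

lemma phiX_replicate_a (n : ℕ) : phiX (List.replicate n XLetter.a) = ((n : ℤ), 0, 0) := by
  induction n with
  | zero => simp
  | succ n ih =>
      simp only [List.replicate_succ, phiX_cons, ih, m3, stepL]
      refine Prod.ext ?_ (Prod.ext ?_ ?_) <;> push_cast <;> ring

lemma phiX_replicate_A (n : ℕ) : phiX (List.replicate n XLetter.A) = (-(n : ℤ), 0, 0) := by
  induction n with
  | zero => simp
  | succ n ih =>
      simp only [List.replicate_succ, phiX_cons, ih, m3, stepL]
      refine Prod.ext ?_ (Prod.ext ?_ ?_) <;> push_cast <;> ring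

lemma phiX_replicate_b (n : ℕ) : phiX (List.replicate n XLetter.b) = (0, (n : ℤ), 0) := by
  induction n with
  | zero => simp
  | succ n ih =>
      simp only [List.replicate_succ, phiX_cons, ih, m3, stepL]
      refine Prod.ext ?_ (Prod.ext ?_ ?_) <;> push_cast <;> ring

lemma phiX_replicate_B (n : ℕ) : phiX (List.replicate n XLetter.B) = (0, -(n : ℤ), 0) := by
  induction n with
  | zero => simp
  | succ n ih =>
      simp only [List.replicate_succ, phiX_cons, ih, m3, stepL]
      refine Prod.ext ?_ (Prod.ext ?_ ?_) <;> push_cast <;> ring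

@[simp] lemma phiX_apow (k : ℤ) : phiX (apow k) = (k, 0, 0) := by
  unfold apow
  split
  · rw [phiX_replicate_a]; simp; omega
  · rw [phiX_replicate_A]; simp; omega

@[simp] lemma phiX_bpow (k : ℤ) : phiX (bpow k) = (0, k, 0) := by
  unfold bpow
  split
  · rw [phiX_replicate_b]; simp; omega
  · rw [phiX_replicate_B]; simp; omega

@[simp] lemma apow_length (k : ℤ) : (apow k).length = k.natAbs := by
  unfold apow; split <;> simp <;> omega

@[simp] lemma bpow_length (k : ℤ) : (bpow k).length = k.natAbs := by
  unfold bpow; split <;> simp <;> omega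
/-- Certificate that `(x,y,z)` is reachable by a word of length `≤ n`:
`M`/`m` bound the range of the `x`-walk, `r`/`s` count up/down `b`-steps. -/
def Reach (n : ℕ) (x y z : ℤ) : Prop :=
  ∃ M m r s : ℤ, x ≤ M ∧ 0 ≤ M ∧ m ≤ x ∧ m ≤ 0 ∧ 0 ≤ r ∧ 0 ≤ s ∧ r - s = y ∧
    2*M - 2*m - (x.natAbs : ℤ) + r + s ≤ n ∧ z ≤ M*r - m*s

lemma reach_zero : Reach 0 0 0 0 := ⟨0, 0, 0, 0, by norm_num⟩

lemma reach_a {n x y z} (h : Reach n x y z) : Reach (n+1) (x+1) y z := by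
  obtain ⟨M, m, r, s, h1, h2, h3, h4, h5, h6, h7, h8, h9⟩ := h
  by_cases hc : x + 1 ≤ M
  · exact ⟨M, m, r, s, hc, h2, by omega, h4, h5, h6, h7, by omega, h9⟩
  · refine ⟨M + 1, m, r, s, by omega, by omega, by omega, h4, h5, h6, h7,
      by omega, ?_⟩
    nlinarith [h5]

lemma reach_A {n x y z} (h : Reach n x y z) : Reach (n+1) (x-1) y z := by
  obtain ⟨M, m, r, s, h1, h2, h3, h4, h5, h6, h7, h8, h9⟩ := h
  by_cases hc : m ≤ x - 1
  · exact ⟨M, m, r, s, by omega, h2, hc, h4, h5, h6, h7, by omega, h9⟩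
  · refine ⟨M, m - 1, r, s, by omega, h2, by omega, by omega, h5, h6, h7,
      by omega, ?_⟩
    nlinarith [h6]

lemma reach_b {n x y z} (h : Reach n x y z) : Reach (n+1) x (y+1) (z+x) := by
  obtain ⟨M, m, r, s, h1, h2, h3, h4, h5, h6, h7, h8, h9⟩ := h
  refine ⟨M, m, r + 1, s, h1, h2, h3, h4, by omega, h6, by omega,
    by omega, ?_⟩
  nlinarith []

lemma reach_B {n x y z} (h : Reach n x y z) : Reach (n+1) x (y-1) (z-x) := by
  obtain ⟨M, m, r, s, h1, h2, h3, h4, h5, h6, h7, h8, h9⟩ := h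
  refine ⟨M, m, r, s + 1, h1, h2, h3, h4, h5, by omega, by omega,
    by omega, ?_⟩
  nlinarith []

lemma reach_of_word (w : List XLetter) :
    Reach w.length (phiX w).1 (phiX w).2.1 (phiX w).2.2 := by
  induction w using List.reverseRecOn with
  | nil => simpa using reach_zero
  | append_singleton w l ih =>
      rcases hp : phiX w with ⟨x, y, z⟩
      rw [hp] at ih
      rw [phiX_append, phiX_single, hp, List.length_append]
      cases l <;>
        simp only [stepL, m3, mul_zero, mul_one, mul_neg_one, add_zero, zero_add,
          ← sub_eq_add_neg]
      · exact reach_a ih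
      · exact reach_A ih
      · exact reach_b ih
      · exact reach_B ih
/-- The `b`-first 6-block word `b^{b1} a^{a1} b^{b2} a^{a2} b^{b3} a^{a3}`. -/
def form2w (b1 a1 b2 a2 b3 a3 : ℤ) : List XLetter :=
  bpow b1 ++ apow a1 ++ bpow b2 ++ apow a2 ++ bpow b3 ++ apow a3

/-- A word is shaped if it is one of the two 6-block normal forms. -/
def IsShaped (w : List XLetter) : Prop :=
  ∃ a1 b1 a2 b2 a3 b3 : ℤ,
    w = apow a1 ++ bpow b1 ++ apow a2 ++ bpow b2 ++ apow a3 ++ bpow b3 ∨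
    w = bpow b1 ++ apow a1 ++ bpow b2 ++ apow a2 ++ bpow b3 ++ apow a3

lemma isShaped_form2w (b1 a1 b2 a2 b3 a3 : ℤ) : IsShaped (form2w b1 a1 b2 a2 b3 a3) :=
  ⟨a1, b1, a2, b2, a3, b3, Or.inr rfl⟩

lemma phiX_form2w (b1 a1 b2 a2 b3 a3 : ℤ) :
    phiX (form2w b1 a1 b2 a2 b3 a3) =
      (a1 + a2 + a3, b1 + b2 + b3, b2 * a1 + b3 * (a1 + a2)) := by
  simp only [form2w, phiX_append, phiX_apow, phiX_bpow, m3]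
  refine Prod.ext ?_ (Prod.ext ?_ ?_) <;> simp <;> ring

lemma length_form2w (b1 a1 b2 a2 b3 a3 : ℤ) :
    (form2w b1 a1 b2 a2 b3 a3).length =
      b1.natAbs + a1.natAbs + b2.natAbs + a2.natAbs + b3.natAbs + a3.natAbs := by
  simp [form2w]; omega

/-- The key construction: if `z ≤ P*Q` for a feasible "rectangle" `P × Q`, there is a
shaped word of length at most `2P + 2Q - x - y` representing `(x,y,z)`. -/
lemma construct {x y z P Q : ℤ} {n : ℕ} (hx : 0 ≤ x) (hy : 0 ≤ y) (hz : 0 ≤ z)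
    (hP : x ≤ P) (hQ : y ≤ Q) (hzPQ : z ≤ P * Q) (hQ0 : 0 ≤ Q)
    (hbud : 2*P + 2*Q - x - y ≤ (n : ℤ)) :
    ∃ w, IsShaped w ∧ phiX w = (x, y, z) ∧ w.length ≤ n := by
  rcases eq_or_lt_of_le hz with rfl | hz1
  · refine ⟨form2w y x 0 0 0 0, isShaped_form2w _ _ _ _ _ _, ?_, ?_⟩
    · rw [phiX_form2w]; refine Prod.ext ?_ (Prod.ext ?_ ?_) <;> simp
    · rw [length_form2w]; omega
  · -- z ≥ 1
    have hP1 : 0 < P := by nlinarith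
    obtain ⟨q, j, hq0, hj1, hjP, hzeq⟩ : ∃ q j : ℤ, 0 ≤ q ∧ 1 ≤ j ∧ j ≤ P ∧ z = q * P + j := by
      refine ⟨(z-1) / P, z - ((z-1)/P) * P, Int.ediv_nonneg (by omega) (by omega), ?_, ?_, by ring⟩
      · have h1 : 0 ≤ (z-1) % P := Int.emod_nonneg _ (by omega)
        have h2 : P * ((z-1) / P) + (z-1) % P = z - 1 := Int.mul_ediv_add_emod _ _
        have h3 : (z-1)/P * P = P * ((z-1)/P) := mul_comm _ _
        omega
      · have h1 : (z-1) % P < P := Int.emod_lt_of_pos _ hP1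
        have h2 : P * ((z-1) / P) + (z-1) % P = z - 1 := Int.mul_ediv_add_emod _ _
        have h3 : (z-1)/P * P = P * ((z-1)/P) := mul_comm _ _
        omega
    have hqQ : q ≤ Q - 1 := by nlinarith
    refine ⟨form2w (y - 1 - q) j 1 (P - j) q (x - P), isShaped_form2w _ _ _ _ _ _, ?_, ?_⟩
    · rw [phiX_form2w]
      refine Prod.ext ?_ (Prod.ext ?_ ?_)
      · simp
      · simp; omega
      · simp; linarith [hzeq]
    · rw [length_form2w]; omega
def sig1 : XLetter → XLetter | .a => .A | .A => .a | .b => .b | .B => .B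
def sig2 : XLetter → XLetter | .a => .a | .A => .A | .b => .B | .B => .b

lemma phiX_map_sig1 (w : List XLetter) :
    phiX (w.map sig1) = (-(phiX w).1, (phiX w).2.1, -(phiX w).2.2) := by
  induction w with
  | nil => simp
  | cons l w ih =>
      rw [List.map_cons, phiX_cons, phiX_cons, ih]
      cases l <;>
        · simp only [sig1, stepL, m3]
          refine Prod.ext ?_ (Prod.ext ?_ ?_) <;> simp <;> ring

lemma phiX_map_sig2 (w : List XLetter) :
    phiX (w.map sig2) = ((phiX w).1, -(phiX w).2.1, -(phiX w).2.2) := by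
  induction w with
  | nil => simp
  | cons l w ih =>
      rw [List.map_cons, phiX_cons, phiX_cons, ih]
      cases l <;>
        · simp only [sig2, stepL, m3]
          refine Prod.ext ?_ (Prod.ext ?_ ?_) <;> simp <;> ring

lemma phiX_reverse (w : List XLetter) :
    phiX w.reverse = ((phiX w).1, (phiX w).2.1, (phiX w).1 * (phiX w).2.1 - (phiX w).2.2) := by
  induction w with
  | nil => simp
  | cons l w ih =>
      rw [List.reverse_cons, phiX_append, ih, phiX_cons]
      simp only [phiX_nil, m3_zero_right]
      cases l <;>
        · simp only [stepL, m3]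
          refine Prod.ext ?_ (Prod.ext ?_ ?_) <;> simp [m3, stepL] <;> ring

lemma map_sig1_apow (k : ℤ) : (apow k).map sig1 = apow (-k) := by
  rcases lt_trichotomy k 0 with h | rfl | h
  · rw [apow, if_neg (by omega), apow, if_pos (by omega), List.map_replicate]
    rfl
  · simp [apow]
  · rw [apow, if_pos (by omega), apow, if_neg (by omega), List.map_replicate, neg_neg]
    rfl

lemma map_sig1_bpow (k : ℤ) : (bpow k).map sig1 = bpow k := by
  rw [bpow]; split <;> rw [List.map_replicate] <;> rfl

lemma map_sig2_apow (k : ℤ) : (apow k).map sig2 = apow k := by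
  rw [apow]; split <;> rw [List.map_replicate] <;> rfl

lemma map_sig2_bpow (k : ℤ) : (bpow k).map sig2 = bpow (-k) := by
  rcases lt_trichotomy k 0 with h | rfl | h
  · rw [bpow, if_neg (by omega), bpow, if_pos (by omega), List.map_replicate]
    rfl
  · simp [bpow]
  · rw [bpow, if_pos (by omega), bpow, if_neg (by omega), List.map_replicate, neg_neg]
    rfl

lemma reverse_apow (k : ℤ) : (apow k).reverse = apow k := by
  rw [apow]; split <;> rw [List.reverse_replicate]

lemma reverse_bpow (k : ℤ) : (bpow k).reverse = bpow k := by
  rw [bpow]; split <;> rw [List.reverse_replicate]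

lemma isShaped_map_sig1 {w : List XLetter} (h : IsShaped w) : IsShaped (w.map sig1) := by
  obtain ⟨a1, b1, a2, b2, a3, b3, h | h⟩ := h <;> subst h <;>
    refine ⟨-a1, b1, -a2, b2, -a3, b3, ?_⟩
  · left
    simp only [List.map_append, map_sig1_apow, map_sig1_bpow]
  · right
    simp only [List.map_append, map_sig1_apow, map_sig1_bpow]

lemma isShaped_map_sig2 {w : List XLetter} (h : IsShaped w) : IsShaped (w.map sig2) := by
  obtain ⟨a1, b1, a2, b2, a3, b3, h | h⟩ := h <;> subst h <;>
    refine ⟨a1, -b1, a2, -b2, a3, -b3, ?_⟩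
  · left
    simp only [List.map_append, map_sig2_apow, map_sig2_bpow]
  · right
    simp only [List.map_append, map_sig2_apow, map_sig2_bpow]

lemma isShaped_reverse {w : List XLetter} (h : IsShaped w) : IsShaped w.reverse := by
  obtain ⟨a1, b1, a2, b2, a3, b3, h | h⟩ := h <;> subst h
  · exact ⟨a3, b3, a2, b2, a1, b1, Or.inr (by
      simp only [List.reverse_append, reverse_apow, reverse_bpow, List.append_assoc])⟩
  · exact ⟨a3, b3, a2, b2, a1, b1, Or.inl (by
      simp only [List.reverse_append, reverse_apow, reverse_bpow, List.append_assoc])⟩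

/-- Canonical case of the main combinatorial theorem. -/
lemma exists_shaped_pos {n : ℕ} {x y z : ℤ} (h : Reach n x y z)
    (hx : 0 ≤ x) (hy : 0 ≤ y) (hz : x * y ≤ 2 * z) :
    ∃ w', IsShaped w' ∧ phiX w' = (x, y, z) ∧ w'.length ≤ n := by
  obtain ⟨M, m, r, s, h1, h2, h3, h4, h5, h6, h7, h8, h9⟩ := h
  have hxy : 0 ≤ x * y := mul_nonneg hx hy
  have hz0 : 0 ≤ z := by omega
  have hzPQ : z ≤ (M - m) * r := by nlinarith
  have habs : (x.natAbs : ℤ) = x := by omega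
  exact construct hx hy hz0 (by omega) (by omega) hzPQ h5 (by omega)

/-- Main combinatorial theorem: every word has a shaped companion of no greater
length representing the same triple. -/
theorem exists_shaped (w : List XLetter) :
    ∃ w', IsShaped w' ∧ phiX w' = phiX w ∧ w'.length ≤ w.length := by
  -- reduce to x ≥ 0, y ≥ 0 via sig1/sig2, then to 2z ≥ xy via reverse
  suffices H : ∀ u : List XLetter, 0 ≤ (phiX u).1 → 0 ≤ (phiX u).2.1 →
      ∃ w', IsShaped w' ∧ phiX w' = phiX u ∧ w'.length ≤ u.length by
    rcases le_or_gt 0 (phiX w).1 with hx | hx <;> rcases le_or_gt 0 (phiX w).2.1 with hy | hy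
    · exact H w hx hy
    · obtain ⟨w', hs, hφ, hl⟩ := H (w.map sig2)
        (by rw [phiX_map_sig2]; exact hx) (by rw [phiX_map_sig2]; simpa using hy.le)
      refine ⟨w'.map sig2, isShaped_map_sig2 hs, ?_, by simpa using hl⟩
      rw [phiX_map_sig2, hφ, phiX_map_sig2]
      refine Prod.ext ?_ (Prod.ext ?_ ?_) <;> simp
    · obtain ⟨w', hs, hφ, hl⟩ := H (w.map sig1)
        (by rw [phiX_map_sig1]; simpa using hx.le) (by rw [phiX_map_sig1]; exact hy)
      refine ⟨w'.map sig1, isShaped_map_sig1 hs, ?_, by simpa using hl⟩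
      rw [phiX_map_sig1, hφ, phiX_map_sig1]
      refine Prod.ext ?_ (Prod.ext ?_ ?_) <;> simp
    · obtain ⟨w', hs, hφ, hl⟩ := H ((w.map sig1).map sig2)
        (by rw [phiX_map_sig2, phiX_map_sig1]; simpa using hx.le)
        (by rw [phiX_map_sig2, phiX_map_sig1]; simpa using hy.le)
      refine ⟨(w'.map sig2).map sig1, isShaped_map_sig1 (isShaped_map_sig2 hs), ?_,
        by simpa using hl⟩
      rw [phiX_map_sig1, phiX_map_sig2, hφ, phiX_map_sig2, phiX_map_sig1]
      refine Prod.ext ?_ (Prod.ext ?_ ?_) <;> simp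
  intro u hx hy
  rcases le_or_gt ((phiX u).1 * (phiX u).2.1) (2 * (phiX u).2.2) with hz | hz
  · obtain ⟨w', hs, hφ, hl⟩ := exists_shaped_pos (reach_of_word u) hx hy hz
    exact ⟨w', hs, by rw [hφ], hl⟩
  · -- use reversal:  z' = x*y - z  satisfies  x*y ≤ 2z'
    have hru := phiX_reverse u
    have hx' : 0 ≤ (phiX u.reverse).1 := by rw [hru]; exact hx
    have hy' : 0 ≤ (phiX u.reverse).2.1 := by rw [hru]; exact hy
    have hz' : (phiX u.reverse).1 * (phiX u.reverse).2.1 ≤ 2 * (phiX u.reverse).2.2 := by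
      rw [hru]; simp; omega
    obtain ⟨w', hs, hφ, hl⟩ := exists_shaped_pos (reach_of_word u.reverse) hx' hy' hz'
    refine ⟨w'.reverse, isShaped_reverse hs, ?_, by simpa using hl⟩
    rw [phiX_reverse, hφ, hru]
    refine Prod.ext ?_ (Prod.ext ?_ ?_) <;> simp <;> ring
def Hc : Heis := ⁅Ha, Hb⁆

lemma rel_mk {r : FreeGroup HGen} (hr : r ∈ Hrels) : PresentedGroup.mk Hrels r = 1 := by
  exact (QuotientGroup.eq_one_iff r).mpr (Subgroup.subset_normalClosure hr)

lemma comm_a : Commute Hc Ha := by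
  have h := rel_mk (show ⁅FreeGroup.of HGen.a, ⁅FreeGroup.of HGen.a, FreeGroup.of HGen.b⁆⁆
      ∈ Hrels from Set.mem_insert _ _)
  rw [map_commutatorElement, map_commutatorElement] at h
  exact (commutatorElement_eq_one_iff_commute.mp h).symm

lemma comm_b : Commute Hc Hb := by
  have h := rel_mk (show ⁅FreeGroup.of HGen.b, ⁅FreeGroup.of HGen.a, FreeGroup.of HGen.b⁆⁆
      ∈ Hrels from Set.mem_insert_of_mem _ rfl)
  rw [map_commutatorElement, map_commutatorElement] at h
  exact (commutatorElement_eq_one_iff_commute.mp h).symm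

lemma key1 : Ha * Hb = Hc * (Hb * Ha) := by
  rw [Hc, commutatorElement_def]; group

lemma key1' : Ha⁻¹ * Hb = Hc⁻¹ * (Hb * Ha⁻¹) := by
  apply mul_left_cancel (a := Hc)
  rw [mul_inv_cancel_left, ← mul_assoc, comm_a.inv_right.eq, mul_assoc, Hc,
    commutatorElement_def]
  group

lemma key (x : ℤ) : Ha ^ x * Hb = Hc ^ x * (Hb * Ha ^ x) := by
  induction x using Int.induction_on with
  | zero => simp
  | succ i ih =>
      have h1 : Ha ^ ((i:ℤ)+1) = Ha ^ (i:ℤ) * Ha := zpow_add_one Ha i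
      have h2 : Hc ^ ((i:ℤ)+1) = Hc * Hc ^ (i:ℤ) := by
        rw [show (i:ℤ)+1 = 1 + (i:ℤ) by ring, zpow_add, zpow_one]
      have hca : Hc * Ha ^ (i:ℤ) = Ha ^ (i:ℤ) * Hc := (comm_a.zpow_right (i:ℤ)).eq
      calc Ha ^ ((i:ℤ)+1) * Hb = Ha ^ (i:ℤ) * (Ha * Hb) := by rw [h1, mul_assoc]
        _ = Ha ^ (i:ℤ) * (Hc * (Hb * Ha)) := by rw [key1]
        _ = Hc * (Ha ^ (i:ℤ) * (Hb * Ha)) := by rw [← mul_assoc, ← hca, mul_assoc]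
        _ = Hc * ((Ha ^ (i:ℤ) * Hb) * Ha) := by rw [mul_assoc]
        _ = Hc * ((Hc ^ (i:ℤ) * (Hb * Ha ^ (i:ℤ))) * Ha) := by rw [ih]
        _ = Hc ^ ((i:ℤ)+1) * (Hb * Ha ^ ((i:ℤ)+1)) := by rw [h2, h1]; simp only [mul_assoc]
  | pred i ih =>
      have h1 : Ha ^ (-(i:ℤ)-1) = Ha ^ (-(i:ℤ)) * Ha⁻¹ := zpow_sub_one Ha _
      have h2 : Hc ^ (-(i:ℤ)-1) = Hc⁻¹ * Hc ^ (-(i:ℤ)) := by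
        rw [show -(i:ℤ)-1 = -1 + -(i:ℤ) by ring, zpow_add, zpow_neg_one]
      have hca : Hc⁻¹ * Ha ^ (-(i:ℤ)) = Ha ^ (-(i:ℤ)) * Hc⁻¹ :=
        (comm_a.inv_left.zpow_right _).eq
      calc Ha ^ (-(i:ℤ)-1) * Hb = Ha ^ (-(i:ℤ)) * (Ha⁻¹ * Hb) := by rw [h1, mul_assoc]
        _ = Ha ^ (-(i:ℤ)) * (Hc⁻¹ * (Hb * Ha⁻¹)) := by rw [key1']
        _ = Hc⁻¹ * (Ha ^ (-(i:ℤ)) * (Hb * Ha⁻¹)) := by rw [← mul_assoc, ← hca, mul_assoc]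
        _ = Hc⁻¹ * ((Ha ^ (-(i:ℤ)) * Hb) * Ha⁻¹) := by rw [mul_assoc]
        _ = Hc⁻¹ * ((Hc ^ (-(i:ℤ)) * (Hb * Ha ^ (-(i:ℤ)))) * Ha⁻¹) := by rw [ih]
        _ = Hc ^ (-(i:ℤ)-1) * (Hb * Ha ^ (-(i:ℤ)-1)) := by rw [h2, h1]; simp only [mul_assoc]

lemma keyB (x : ℤ) : Ha ^ x * Hb⁻¹ = Hc ^ (-x) * (Hb⁻¹ * Ha ^ x) := by
  have hcbx : Hb⁻¹ * Hc ^ x = Hc ^ x * Hb⁻¹ := ((comm_b.zpow_left x).inv_right.eq).symm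
  have h2 : Hb⁻¹ * (Ha ^ x * Hb) = Hc ^ x * Ha ^ x := by
    rw [key x, ← mul_assoc, ← mul_assoc, hcbx, mul_assoc (Hc ^ x)]
    simp
  have h3 : Hb⁻¹ * Ha ^ x = Hc ^ x * (Ha ^ x * Hb⁻¹) := by
    have h4 := congrArg (· * Hb⁻¹) h2
    simp only [mul_assoc] at h4
    simpa [mul_assoc] using h4
  rw [h3, ← mul_assoc, ← zpow_add]
  simp

lemma hElt_def (x y z : ℤ) : hElt x y z = Hc ^ z * Hb ^ y * Ha ^ x := rfl

lemma hElt_mul_a (x y z : ℤ) : hElt x y z * Ha = hElt (x+1) y z := by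
  rw [hElt_def, hElt_def, mul_assoc, ← zpow_add_one]

lemma hElt_mul_A (x y z : ℤ) : hElt x y z * Ha⁻¹ = hElt (x-1) y z := by
  rw [hElt_def, hElt_def, mul_assoc, ← zpow_sub_one]

lemma hElt_mul_b (x y z : ℤ) : hElt x y z * Hb = hElt x (y+1) (z+x) := by
  have hcbxy : Hc ^ x * Hb ^ y = Hb ^ y * Hc ^ x := ((comm_b.zpow_left x).zpow_right y).eq
  rw [hElt_def, hElt_def]
  calc Hc ^ z * Hb ^ y * Ha ^ x * Hb = Hc ^ z * (Hb ^ y * (Ha ^ x * Hb)) := by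
        simp only [mul_assoc]
    _ = Hc ^ z * (Hb ^ y * (Hc ^ x * (Hb * Ha ^ x))) := by rw [key]
    _ = Hc ^ z * ((Hb ^ y * Hc ^ x) * (Hb * Ha ^ x)) := by simp only [mul_assoc]
    _ = Hc ^ z * ((Hc ^ x * Hb ^ y) * (Hb * Ha ^ x)) := by rw [← hcbxy]
    _ = (Hc ^ z * Hc ^ x) * ((Hb ^ y * Hb) * Ha ^ x) := by simp only [mul_assoc]
    _ = Hc ^ (z+x) * Hb ^ (y+1) * Ha ^ x := by
        rw [← zpow_add, ← zpow_add_one]; simp only [mul_assoc]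

lemma hElt_mul_B (x y z : ℤ) : hElt x y z * Hb⁻¹ = hElt x (y-1) (z-x) := by
  have hcbxy : Hc ^ (-x) * Hb ^ y = Hb ^ y * Hc ^ (-x) := ((comm_b.zpow_left _).zpow_right y).eq
  rw [hElt_def, hElt_def]
  calc Hc ^ z * Hb ^ y * Ha ^ x * Hb⁻¹ = Hc ^ z * (Hb ^ y * (Ha ^ x * Hb⁻¹)) := by
        simp only [mul_assoc]
    _ = Hc ^ z * (Hb ^ y * (Hc ^ (-x) * (Hb⁻¹ * Ha ^ x))) := by rw [keyB]
    _ = Hc ^ z * ((Hb ^ y * Hc ^ (-x)) * (Hb⁻¹ * Ha ^ x)) := by simp only [mul_assoc]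
    _ = Hc ^ z * ((Hc ^ (-x) * Hb ^ y) * (Hb⁻¹ * Ha ^ x)) := by rw [← hcbxy]
    _ = (Hc ^ z * Hc ^ (-x)) * ((Hb ^ y * Hb⁻¹) * Ha ^ x) := by simp only [mul_assoc]
    _ = Hc ^ (z-x) * Hb ^ (y-1) * Ha ^ x := by
        rw [← zpow_sub_one]
        rw [show Hc ^ z * Hc ^ (-x) = Hc ^ (z - x) by rw [← zpow_add]; ring_nf]
        simp only [mul_assoc]

lemma evalX_append (u v : List XLetter) : evalX (u ++ v) = evalX u * evalX v := by
  simp [evalX]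

lemma evalX_eq_hElt (w : List XLetter) :
    evalX w = hElt (phiX w).1 (phiX w).2.1 (phiX w).2.2 := by
  induction w using List.reverseRecOn with
  | nil => simp [evalX, hElt]
  | append_singleton w l ih =>
      rw [evalX_append, phiX_append]
      rcases hp : phiX w with ⟨x, y, z⟩
      rw [hp] at ih
      have hsingle : evalX [l] = l.toH := by simp [evalX]
      rw [hsingle, phiX_single, ih]
      cases l <;>
        simp only [stepL, m3, XLetter.toH, mul_zero, mul_one, mul_neg_one, add_zero, zero_add,
          ← sub_eq_add_neg]
      · exact hElt_mul_a x y z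
      · exact hElt_mul_A x y z
      · exact hElt_mul_b x y z
      · exact hElt_mul_B x y z
lemma hElt_repr (x y z : ℤ) : evalX (form2w (y - z) 1 z (-1) 0 x) = hElt x y z := by
  rw [evalX_eq_hElt, phiX_form2w]
  norm_num

/-- Every element `(x,y,z)` of the discrete Heisenberg group `𝓗` has a
geodesic representative with respect to `X = {a,a⁻¹,b,b⁻¹}` of the form
`a^{α₁} b^{β₁} a^{α₂} b^{β₂} a^{α₃} b^{β₃}` or `b^{β₁} a^{α₁} b^{β₂} a^{α₂} b^{β₃} a^{α₃}`. -/
theorem heisenberg_geodesic_normal_form (x y z : ℤ) :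
    ∃ α₁ β₁ α₂ β₂ α₃ β₃ : ℤ, ∃ w : List XLetter,
      (w = apow α₁ ++ bpow β₁ ++ apow α₂ ++ bpow β₂ ++ apow α₃ ++ bpow β₃ ∨
        w = bpow β₁ ++ apow α₁ ++ bpow β₂ ++ apow α₂ ++ bpow β₃ ++ apow α₃) ∧
      evalX w = hElt x y z ∧ IsGeodesicX w := by
  set S : Set ℕ := {n | ∃ w : List XLetter, evalX w = hElt x y z ∧ w.length = n} with hS
  have hne : S.Nonempty := ⟨_, ⟨form2w (y - z) 1 z (-1) 0 x, hElt_repr x y z, rfl⟩⟩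
  obtain ⟨u, hu, hulen⟩ := Nat.sInf_mem hne
  obtain ⟨w', hs, hφ, hl⟩ := exists_shaped u
  have hw' : evalX w' = hElt x y z := by
    rw [evalX_eq_hElt, hφ, ← evalX_eq_hElt, hu]
  have hmem : w'.length ∈ S := ⟨w', hw', rfl⟩
  have hge : sInf S ≤ w'.length := Nat.sInf_le hmem
  have hlen : w'.length = lenX (hElt x y z) := by
    have : lenX (hElt x y z) = sInf S := rfl
    omega
  obtain ⟨a1, b1, a2, b2, a3, b3, hform⟩ := hs
  exact ⟨a1, b1, a2, b2, a3, b3, w', hform, hw', by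
    rw [IsGeodesicX, hw']; exact hlen⟩
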